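/- Let π_rel be a fully supported probability distribution on a finite set Y, v : Y → ℝ, and for η ≥ 0 define π_η(y) ∝ π_rel(y)·exp(η·v(y)). Then the map η ↦ KL(π_η ‖ π_rel) is nondecreasing on [0, ∞), with value 0 at η = 0. -/

import Mathlib

open Real Finset

section aux
set_option linter.unusedSectionVars false
variable {Y : Type*} [Fintype Y] [Nonempty Y] (πrel : Y → ℝ) (v : Y → ℝ)

noncomputable def Zf (η : ℝ) : ℝ := ∑ y, πrel y * Real.exp (η * v y)
noncomputable def Z1f (η : ℝ) : ℝ := ∑ y, πrel y * v y * Real.exp (η * v y)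
noncomputable def Z2f (η : ℝ) : ℝ := ∑ y, πrel y * v y ^ 2 * Real.exp (η * v y)
noncomputable def Bf (η : ℝ) : ℝ := Z1f πrel v η / Zf πrel v η
noncomputable def Af (η : ℝ) : ℝ := Real.log (Zf πrel v η)

variable (hrel0 : ∀ y, 0 < πrel y)

include hrel0 in
lemma Zf_pos (η : ℝ) : 0 < Zf πrel v η :=
  Finset.sum_pos (fun y _ => mul_pos (hrel0 y) (Real.exp_pos _)) Finset.univ_nonempty

lemma hasDerivAt_Zf (η : ℝ) : HasDerivAt (Zf πrel v) (Z1f πrel v η) η := by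
  have : HasDerivAt (Zf πrel v) (∑ y, πrel y * (Real.exp (η * v y) * v y)) η := by
    apply HasDerivAt.fun_sum
    intro y _
    simpa using (((hasDerivAt_id η).mul_const (v y)).exp).const_mul (πrel y)
  convert this using 1
  unfold Z1f; congr 1; ext y; ring

lemma hasDerivAt_Z1f (η : ℝ) : HasDerivAt (Z1f πrel v) (Z2f πrel v η) η := by
  have : HasDerivAt (Z1f πrel v) (∑ y, πrel y * v y * (Real.exp (η * v y) * v y)) η := by
    apply HasDerivAt.fun_sum
    intro y _
    simpa using (((hasDerivAt_id η).mul_const (v y)).exp).const_mul (πrel y * v y)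
  convert this using 1
  unfold Z2f; congr 1; ext y; ring

include hrel0 in
lemma hasDerivAt_Af (η : ℝ) : HasDerivAt (Af πrel v) (Bf πrel v η) η :=
  (hasDerivAt_Zf πrel v η).log (Zf_pos πrel v hrel0 η).ne'

include hrel0 in
lemma cs_ineq (η : ℝ) : Z1f πrel v η ^ 2 ≤ Z2f πrel v η * Zf πrel v η := by
  have h := Finset.sum_mul_sq_le_sq_mul_sq Finset.univ
    (fun y => v y * Real.sqrt (πrel y * Real.exp (η * v y)))
    (fun y => Real.sqrt (πrel y * Real.exp (η * v y)))
  have hw : ∀ y : Y, (0:ℝ) ≤ πrel y * Real.exp (η * v y) :=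
    fun y => le_of_lt (mul_pos (hrel0 y) (Real.exp_pos _))
  calc Z1f πrel v η ^ 2
      = (∑ y, (v y * Real.sqrt (πrel y * Real.exp (η * v y))) *
          Real.sqrt (πrel y * Real.exp (η * v y))) ^ 2 := by
        unfold Z1f; congr 2; ext y
        rw [mul_assoc (v y), Real.mul_self_sqrt (hw y)]; ring
    _ ≤ (∑ y, (v y * Real.sqrt (πrel y * Real.exp (η * v y))) ^ 2) *
          ∑ y, Real.sqrt (πrel y * Real.exp (η * v y)) ^ 2 := h
    _ = Z2f πrel v η * Zf πrel v η := by
        unfold Z2f Zf; congr 1 <;> (congr 1; ext y)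
        · rw [mul_pow, Real.sq_sqrt (hw y)]; ring
        · rw [Real.sq_sqrt (hw y)]

include hrel0 in
lemma hasDerivAt_Bf (η : ℝ) :
    HasDerivAt (Bf πrel v)
      ((Z2f πrel v η * Zf πrel v η - Z1f πrel v η * Z1f πrel v η) / Zf πrel v η ^ 2) η :=
  (hasDerivAt_Z1f πrel v η).div (hasDerivAt_Zf πrel v η) (Zf_pos πrel v hrel0 η).ne'

include hrel0 in
lemma Bf_mono : Monotone (Bf πrel v) := by
  apply monotone_of_deriv_nonneg
  · exact fun x => (hasDerivAt_Bf πrel v hrel0 x).differentiableAt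
  · intro x
    rw [(hasDerivAt_Bf πrel v hrel0 x).deriv]
    apply div_nonneg _ (sq_nonneg _)
    have := cs_ineq πrel v hrel0 x
    nlinarith
end aux

/-- The KL divergence of the tilted distribution from the base distribution is
nondecreasing in `η ≥ 0` and vanishes at `η = 0`. -/
theorem stmt_11 {Y : Type*} [Fintype Y] [Nonempty Y]
    (πrel : Y → ℝ) (hrel0 : ∀ y, 0 < πrel y) (hrel1 : ∑ y, πrel y = 1)
    (v : Y → ℝ)
    (πt : ℝ → Y → ℝ)
    (hπt : ∀ η y, πt η y = πrel y * Real.exp (η * v y)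
        / ∑ y', πrel y' * Real.exp (η * v y')) :
    MonotoneOn (fun η : ℝ => ∑ y, πt η y * Real.log (πt η y / πrel y))
      (Set.Ici 0)
    ∧ (∑ y, πt 0 y * Real.log (πt 0 y / πrel y)) = 0 := by
  have hZpos := Zf_pos πrel v hrel0
  -- KL formula
  have hKL : ∀ η : ℝ, (∑ y, πt η y * Real.log (πt η y / πrel y))
      = η * Bf πrel v η - Af πrel v η := by
    intro η
    have hZ : (∑ y', πrel y' * Real.exp (η * v y')) = Zf πrel v η := rfl
    have key : ∀ y : Y, πt η y * Real.log (πt η y / πrel y)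
        = (πrel y * Real.exp (η * v y) / Zf πrel v η) * (η * v y - Af πrel v η) := by
      intro y
      rw [hπt, hZ]
      congr 1
      rw [mul_comm (πrel y), div_right_comm, mul_div_assoc, div_self (hrel0 y).ne', mul_one,
        Real.log_div (Real.exp_ne_zero _) (hZpos η).ne', Real.log_exp]
      rfl
    rw [Finset.sum_congr rfl (fun y _ => key y)]
    have e1 : ∑ y, (πrel y * Real.exp (η * v y) / Zf πrel v η) * (η * v y - Af πrel v η)
        = η * (Z1f πrel v η / Zf πrel v η) - Af πrel v η * (Zf πrel v η / Zf πrel v η) := by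
      rw [Finset.sum_congr rfl (fun y _ => by ring :
        ∀ y ∈ Finset.univ, (πrel y * Real.exp (η * v y) / Zf πrel v η) * (η * v y - Af πrel v η)
          = η * ((πrel y * v y * Real.exp (η * v y)) / Zf πrel v η)
            - Af πrel v η * ((πrel y * Real.exp (η * v y)) / Zf πrel v η))]
      rw [Finset.sum_sub_distrib, ← Finset.mul_sum, ← Finset.mul_sum,
        ← Finset.sum_div, ← Finset.sum_div]
      rfl
    rw [e1, div_self (hZpos η).ne', mul_one]
    rfl
  have hBmono := Bf_mono πrel v hrel0
  constructor
  · intro a ha b hb hab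
    simp only [hKL]
    rcases eq_or_lt_of_le hab with rfl | hlt
    · exact le_rfl
    · obtain ⟨c, hc, hslope⟩ := exists_hasDerivAt_eq_slope (Af πrel v) (Bf πrel v) hlt
        (fun x _ => (hasDerivAt_Af πrel v hrel0 x).continuousAt.continuousWithinAt)
        (fun x _ => hasDerivAt_Af πrel v hrel0 x)
      have hAeq : Af πrel v b - Af πrel v a = Bf πrel v c * (b - a) := by
        rw [eq_div_iff (sub_ne_zero.2 hlt.ne')] at hslope
        linarith
      have h1 : Bf πrel v c ≤ Bf πrel v b := hBmono hc.2.le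
      have h2 : Bf πrel v a ≤ Bf πrel v b := hBmono hab
      have ha0 : (0:ℝ) ≤ a := ha
      nlinarith
  · rw [hKL 0]
    have : Zf πrel v 0 = 1 := by
      unfold Zf; simp [hrel1]
    simp [Af, this]
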